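/- arXiv:1406.5338 — 4 statements merged into one kernel-verified Lean document; each statement's English description precedes it below -/
import Mathlib

section
/- With Ai ∈ ℂ^{ni×ni}, Bi, Ci matrices of compatible sizes and zi not in the spectrum of Ai (i = 1, 2, 3), the product C1(z1 I - A1)⁻¹ B1 · C2(z2 I - A2)⁻¹ B2 · C3(z3 I - A3)⁻¹ B3 equals C(Λ(z) - A)⁻¹ B, where Λ(z) = diag(z1 I_{n1}, z2 I_{n2}, z3 I_{n3}), A is the block upper-triangular matrix with diagonal blocks A1, A2, A3, superdiagonal blocks B1 C2 and B2 C3, and zero (1,3) block; B = (0, 0, B3)ᵀ and C = (C1, 0, 0). -/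
open Matrix

/-- Realization of the product of three rational matrix functions vanishing at infinity,
each of a different variable:
`C₁(z₁I-A₁)⁻¹B₁ ⬝ C₂(z₂I-A₂)⁻¹B₂ ⬝ C₃(z₃I-A₃)⁻¹B₃ = C (Λ(z) - A)⁻¹ B` where
`Λ(z) = diag(z₁I, z₂I, z₃I)`, `A` is block upper triangular with diagonal `A₁, A₂, A₃`,
superdiagonal `B₁C₂, B₂C₃`, zero `(1,3)` block, `B = (0,0,B₃)ᵀ` and `C = (C₁,0,0)`. -/
theorem product_realization_three_variables_vanishing_at_infinity
    (n1 n2 n3 p q1 q2 q3 : ℕ)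
    (A1 : Matrix (Fin n1) (Fin n1) ℂ) (B1 : Matrix (Fin n1) (Fin q1) ℂ)
    (C1 : Matrix (Fin p) (Fin n1) ℂ)
    (A2 : Matrix (Fin n2) (Fin n2) ℂ) (B2 : Matrix (Fin n2) (Fin q2) ℂ)
    (C2 : Matrix (Fin q1) (Fin n2) ℂ)
    (A3 : Matrix (Fin n3) (Fin n3) ℂ) (B3 : Matrix (Fin n3) (Fin q3) ℂ)
    (C3 : Matrix (Fin q2) (Fin n3) ℂ)
    (z1 z2 z3 : ℂ)
    (h1 : IsUnit (z1 • (1 : Matrix (Fin n1) (Fin n1) ℂ) - A1))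
    (h2 : IsUnit (z2 • (1 : Matrix (Fin n2) (Fin n2) ℂ) - A2))
    (h3 : IsUnit (z3 • (1 : Matrix (Fin n3) (Fin n3) ℂ) - A3)) :
    C1 * (z1 • (1 : Matrix (Fin n1) (Fin n1) ℂ) - A1)⁻¹ * B1 *
        (C2 * (z2 • (1 : Matrix (Fin n2) (Fin n2) ℂ) - A2)⁻¹ * B2) *
        (C3 * (z3 • (1 : Matrix (Fin n3) (Fin n3) ℂ) - A3)⁻¹ * B3) =
      fromCols C1 (0 : Matrix (Fin p) (Fin n2 ⊕ Fin n3) ℂ) *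
        (fromBlocks (z1 • (1 : Matrix (Fin n1) (Fin n1) ℂ)) 0 0
            (fromBlocks (z2 • (1 : Matrix (Fin n2) (Fin n2) ℂ)) 0 0
              (z3 • (1 : Matrix (Fin n3) (Fin n3) ℂ))) -
          fromBlocks A1 (fromCols (B1 * C2) (0 : Matrix (Fin n1) (Fin n3) ℂ)) 0
            (fromBlocks A2 (B2 * C3) 0 A3))⁻¹ *
        fromRows (0 : Matrix (Fin n1) (Fin q3) ℂ) (fromRows (0 : Matrix (Fin n2) (Fin q3) ℂ) B3) := by
  set M1 := z1 • (1 : Matrix (Fin n1) (Fin n1) ℂ) - A1 with hM1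
  set M2 := z2 • (1 : Matrix (Fin n2) (Fin n2) ℂ) - A2 with hM2
  set M3 := z3 • (1 : Matrix (Fin n3) (Fin n3) ℂ) - A3 with hM3
  have hdiff : (fromBlocks (z1 • (1 : Matrix (Fin n1) (Fin n1) ℂ)) 0 0
            (fromBlocks (z2 • (1 : Matrix (Fin n2) (Fin n2) ℂ)) 0 0
              (z3 • (1 : Matrix (Fin n3) (Fin n3) ℂ))) -
          fromBlocks A1 (fromCols (B1 * C2) (0 : Matrix (Fin n1) (Fin n3) ℂ)) 0
            (fromBlocks A2 (B2 * C3) 0 A3)) =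
      fromBlocks M1 (-(fromCols (B1 * C2) (0 : Matrix (Fin n1) (Fin n3) ℂ))) 0
        (fromBlocks M2 (-(B2 * C3)) 0 M3) := by
    rw [hM1, hM2, hM3]
    ext (i|i|i) (j|j|j) <;> simp [fromBlocks, fromCols]
  rw [hdiff]
  have hinner : (fromBlocks M2 (-(B2 * C3)) 0 M3)⁻¹ =
      fromBlocks M2⁻¹ (M2⁻¹ * (B2 * C3) * M3⁻¹) 0 M3⁻¹ := by
    rw [inv_fromBlocks_zero₂₁_of_isUnit_iff _ _ _ (iff_of_true h2 h3)]
    simp [Matrix.mul_assoc]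
  have houter : (fromBlocks M1 (-(fromCols (B1 * C2) (0 : Matrix (Fin n1) (Fin n3) ℂ))) 0
        (fromBlocks M2 (-(B2 * C3)) 0 M3))⁻¹ =
      fromBlocks M1⁻¹
        (M1⁻¹ * (fromCols (B1 * C2) (0 : Matrix (Fin n1) (Fin n3) ℂ)) *
          (fromBlocks M2⁻¹ (M2⁻¹ * (B2 * C3) * M3⁻¹) 0 M3⁻¹)) 0
        (fromBlocks M2⁻¹ (M2⁻¹ * (B2 * C3) * M3⁻¹) 0 M3⁻¹) := by
    rw [inv_fromBlocks_zero₂₁_of_isUnit_iff _ _ _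
      (iff_of_true h1 (isUnit_fromBlocks_zero₂₁.mpr ⟨h2, h3⟩)), hinner]
    rw [Matrix.mul_neg, Matrix.neg_mul, neg_neg]
  rw [houter]
  rw [fromCols_mul_fromBlocks]
  rw [show (fromRows (0 : Matrix (Fin n1) (Fin q3) ℂ) (fromRows (0 : Matrix (Fin n2) (Fin q3) ℂ) B3))
      = fromRows (0 : Matrix (Fin n1) (Fin q3) ℂ) (fromRows (0 : Matrix (Fin n2) (Fin q3) ℂ) B3) from rfl]
  rw [fromCols_mul_fromRows]
  simp [fromCols_mul_fromBlocks, fromCols_mul_fromRows, Matrix.mul_assoc]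
end

section
/- Let M(z) = D + C(zI - A)⁻¹ B be a scalar- or matrix-valued rational function with ρ(A) < 1, and Markov parameters h₀ = D, h_k = C A^{k-1} B for k ≥ 1, and h_k = 0 for k < 0. Define c_n = ∑_{j∈ℤ} h_j* h_{j+n}, Γ = ∑_{u=0}^∞ A*^u C* C A^u, and Y = D* C + B* Γ A. Then c₀ = D* D + B* Γ B, c_n = Y A^{n-1} B for n > 0, and c_n = B* A*^{(-n-1)} Y* for n < 0. -/
open Matrix
open scoped ENNReal Matrix.Norms.L2Operator

/-- Markov parameters: with `M(z) = D + C(zI - A)⁻¹B`, `ρ(A) < 1`, Markov parameters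
`h₀ = D`, `h_k = C A^{k-1} B` (`k ≥ 1`), `h_k = 0` (`k < 0`), and
`c_n = ∑_{j ∈ ℤ} h_j* h_{j+n}`, `Γ = ∑_{u≥0} A*^u C* C A^u`, `Y = D* C + B* Γ A`, one has
`c₀ = D* D + B* Γ B`, `c_n = Y A^{n-1} B` for `n > 0`, `c_n = B* A*^{(-n-1)} Y*` for `n < 0`. -/
theorem markov_parameter_correlation_formulas
    (d p q : ℕ)
    (A : Matrix (Fin d) (Fin d) ℂ) (B : Matrix (Fin d) (Fin q) ℂ)
    (C : Matrix (Fin p) (Fin d) ℂ) (D : Matrix (Fin p) (Fin q) ℂ)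
    (hA : spectralRadius ℂ A < 1)
    (h : ℤ → Matrix (Fin p) (Fin q) ℂ)
    (hh0 : h 0 = D)
    (hhpos : ∀ k : ℕ, h (k + 1) = C * A ^ k * B)
    (hhneg : ∀ k : ℤ, k < 0 → h k = 0)
    (c : ℤ → Matrix (Fin q) (Fin q) ℂ)
    (hc : ∀ n : ℤ, c n = ∑' j : ℤ, (h j)ᴴ * h (j + n))
    (Γ : Matrix (Fin d) (Fin d) ℂ)
    (hΓ : Γ = ∑' u : ℕ, (Aᴴ) ^ u * Cᴴ * C * A ^ u)
    (Y : Matrix (Fin q) (Fin d) ℂ)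
    (hY : Y = Dᴴ * C + Bᴴ * Γ * A) :
    c 0 = Dᴴ * D + Bᴴ * Γ * B ∧
      (∀ n : ℕ, c (n + 1) = Y * A ^ n * B) ∧
      (∀ n : ℕ, c (-(n + 1) : ℤ) = Bᴴ * (Aᴴ) ^ n * Yᴴ) := by
  classical
  -- a geometric bound on ‖A ^ u‖ from the spectral radius hypothesis
  obtain ⟨r, hr0, hr1, hbound⟩ : ∃ r : ℝ, 0 ≤ r ∧ r < 1 ∧
      ∀ᶠ u : ℕ in Filter.atTop, ‖A ^ u‖ ≤ r ^ u := by
    obtain ⟨t, ht1, ht2⟩ := exists_between hA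
    have httop : t ≠ ⊤ := (ht2.trans_le le_top).ne
    refine ⟨t.toReal, ENNReal.toReal_nonneg, ?_, ?_⟩
    · have := (ENNReal.toReal_lt_toReal httop ENNReal.one_ne_top).mpr ht2
      simpa using this
    · have hev := (spectrum.pow_nnnorm_pow_one_div_tendsto_nhds_spectralRadius A
        ).eventually_lt_const ht1
      filter_upwards [hev, Filter.eventually_ge_atTop 1] with u hu hu1
      have hne : (u : ℝ) ≠ 0 := by positivity
      have h2 : ((‖A ^ u‖₊ : ℝ≥0∞) ^ (1 / (u : ℝ))) ^ (u : ℝ) ≤ t ^ (u : ℝ) :=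
        ENNReal.rpow_le_rpow hu.le (by positivity)
      rw [← ENNReal.rpow_mul, one_div_mul_cancel hne, ENNReal.rpow_one,
        ENNReal.rpow_natCast] at h2
      have h4 := ENNReal.toReal_mono (ENNReal.pow_ne_top httop) h2
      simpa [ENNReal.toReal_pow] using h4
  -- the summand of Γ
  set S : ℕ → Matrix (Fin d) (Fin d) ℂ := fun u => (Aᴴ) ^ u * Cᴴ * C * A ^ u with hSdef
  have hS : Summable S := by
    refine Summable.of_norm_bounded_eventually_nat (g := fun u => (‖Cᴴ‖ * ‖C‖) * (r * r) ^ u)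
      (Summable.mul_left _ (summable_geometric_of_lt_one (by positivity)
        (by nlinarith))) ?_
    filter_upwards [hbound] with u hu
    have hAconj : ‖(Aᴴ) ^ u‖ = ‖A ^ u‖ := by
      rw [← conjTranspose_pow, Matrix.l2_opNorm_conjTranspose]
    calc ‖S u‖ ≤ ‖(Aᴴ) ^ u * Cᴴ * C‖ * ‖A ^ u‖ := Matrix.l2_opNorm_mul _ _
      _ ≤ (‖(Aᴴ) ^ u * Cᴴ‖ * ‖C‖) * ‖A ^ u‖ :=
        mul_le_mul_of_nonneg_right (Matrix.l2_opNorm_mul _ _) (norm_nonneg _)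
      _ ≤ ((‖(Aᴴ) ^ u‖ * ‖Cᴴ‖) * ‖C‖) * ‖A ^ u‖ :=
        mul_le_mul_of_nonneg_right (mul_le_mul_of_nonneg_right
          (Matrix.l2_opNorm_mul _ _) (norm_nonneg _)) (norm_nonneg _)
      _ = (‖Cᴴ‖ * ‖C‖) * (‖A ^ u‖ * ‖A ^ u‖) := by rw [hAconj]; ring
      _ ≤ (‖Cᴴ‖ * ‖C‖) * (r ^ u * r ^ u) := by
        have h0 : (0:ℝ) ≤ ‖A ^ u‖ := norm_nonneg _
        have h1 : (0:ℝ) ≤ r ^ u := by positivity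
        gcongr
      _ = (‖Cᴴ‖ * ‖C‖) * (r * r) ^ u := by rw [mul_pow]
  have hΓsum : HasSum S Γ := hΓ ▸ hS.hasSum
  -- pushing the sum through left/right multiplication
  have key : ∀ W : Matrix (Fin d) (Fin q) ℂ,
      HasSum (fun u => Bᴴ * S u * W) (Bᴴ * Γ * W) := by
    intro W
    let φ : Matrix (Fin d) (Fin d) ℂ →ₗ[ℂ] Matrix (Fin q) (Fin q) ℂ :=
      { toFun := fun X => Bᴴ * X * W
        map_add' := fun x y => by simp [Matrix.add_mul, Matrix.mul_add]
        map_smul' := fun m x => by simp [Matrix.mul_smul, Matrix.smul_mul] }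
    have := hΓsum.mapL (LinearMap.toContinuousLinearMap φ)
    simpa [φ] using this
  -- the main computation for nonnegative indices
  have hcn : ∀ n : ℕ, c (n : ℤ) = Dᴴ * h (n : ℤ) + Bᴴ * Γ * (A ^ n * B) := by
    intro n
    rw [hc]
    set f : ℤ → Matrix (Fin q) (Fin q) ℂ := fun j => (h j)ᴴ * h (j + n) with hfdef
    have hinj : Function.Injective (fun k : ℕ => (k : ℤ)) := fun a b hab => Int.natCast_inj.mp hab
    have hsupp : Function.support f ⊆ Set.range (fun k : ℕ => (k : ℤ)) := by
      intro j hj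
      by_contra hmem
      have hj0 : j < 0 := by
        rcases lt_or_ge j 0 with hl | hl
        · exact hl
        · exact absurd ⟨j.toNat, Int.toNat_of_nonneg hl⟩ hmem
      exact hj (by simp [hfdef, hhneg j hj0])
    have h1 : ∑' k : ℕ, f (k : ℤ) = ∑' j : ℤ, f j := hinj.tsum_eq hsupp
    have hsucc : ∀ k : ℕ, f ((k : ℕ) + 1 : ℕ) = Bᴴ * S k * (A ^ n * B) := by
      intro k
      have e1 : h (((k : ℕ) + 1 : ℕ) : ℤ) = C * A ^ k * B := by
        push_cast
        exact hhpos k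
      have e2 : h ((((k : ℕ) + 1 : ℕ) : ℤ) + n) = C * A ^ (k + n) * B := by
        have := hhpos (k + n)
        push_cast at this ⊢
        convert this using 2
        ring
      rw [hfdef]
      simp only [e1, e2]
      simp [hSdef, Matrix.conjTranspose_mul, conjTranspose_pow, pow_add,
        Matrix.mul_assoc]
    have hgs : Summable fun k : ℕ => f (k : ℤ) := by
      rw [← summable_nat_add_iff 1]
      have : (fun k : ℕ => f ((k + 1 : ℕ) : ℤ)) = fun k : ℕ => Bᴴ * S k * (A ^ n * B) := by
        funext k; exact hsucc k
      rw [this]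
      exact (key (A ^ n * B)).summable
    rw [← h1, Summable.tsum_eq_zero_add hgs]
    have : ∑' k : ℕ, f ((k + 1 : ℕ) : ℤ) = Bᴴ * Γ * (A ^ n * B) := by
      rw [show (fun k : ℕ => f ((k + 1 : ℕ) : ℤ)) = fun k : ℕ => Bᴴ * S k * (A ^ n * B) from
        funext fun k => hsucc k]
      exact (key (A ^ n * B)).tsum_eq
    rw [this]
    congr 1
    simp [hfdef, hh0]
  -- negative indices via conjugate transpose symmetry
  have hneg : ∀ m : ℤ, c (-m) = (c m)ᴴ := by
    intro m
    rw [hc, hc]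
    have e := (Equiv.addRight m).tsum_eq (f := fun j : ℤ => (h j)ᴴ * h (j + -m))
    rw [← e]
    simp only [Equiv.coe_addRight, add_neg_cancel_right]
    rw [← Matrix.star_eq_conjTranspose, tsum_star]
    congr 1
    funext i
    simp [Matrix.star_eq_conjTranspose, Matrix.conjTranspose_mul]
  have main0 : c 0 = Dᴴ * D + Bᴴ * Γ * B := by
    have := hcn 0
    simpa [hh0] using this
  have mainpos : ∀ n : ℕ, c (n + 1) = Y * A ^ n * B := by
    intro n
    have := hcn (n + 1)
    push_cast at this
    rw [this, hhpos n]
    simp [hY, Matrix.add_mul, Matrix.mul_assoc, pow_succ']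
  refine ⟨main0, mainpos, fun n => ?_⟩
  have : (-(n + 1) : ℤ) = -((n : ℤ) + 1) := by ring
  rw [this, hneg ((n : ℤ) + 1), mainpos n]
  simp [Matrix.conjTranspose_mul, conjTranspose_pow, Matrix.mul_assoc]
end

section
/- Let (c_n)_{n∈ℤ} be complex numbers satisfying |c_k| ≤ C e^{-α|k|} for some C, α > 0, let N ≥ 2 be an integer, and define the Ruelle operator (Rf)_ℓ = (1/N) ∑_{k∈ℤ} c_{Nℓ-k} f_k on sequences. Then for every β > α and β′ < Nα, R maps the weighted space ℰ_β = {f : ∑_n e^{β|n|}|f_n| < ∞} boundedly into ℰ_{β′}. -/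
set_option maxHeartbeats 1000000 in
/-- Let `(c_n)` satisfy `|c_k| ≤ C e^{-α|k|}`, `N ≥ 2`, and define the Ruelle operator
`(Rf)_ℓ = (1/N) ∑_k c_{Nℓ-k} f_k`. Then for every `β > α` and `β' < Nα`, `R` maps the
weighted space `ℰ_β = {f : ∑ e^{β|n|} |f_n| < ∞}` boundedly into `ℰ_{β'}`. -/
theorem ruelle_operator_bounded_weighted_spaces
    (c : ℤ → ℂ) (C0 α : ℝ) (hC0 : 0 < C0) (hα : 0 < α)
    (hc : ∀ k : ℤ, ‖c k‖ ≤ C0 * Real.exp (-α * |(k : ℝ)|))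
    (N : ℕ) (hN : 2 ≤ N)
    (β β' : ℝ) (hβ : α < β) (hβ' : β' < N * α) :
    ∃ K : ℝ, ∀ f : ℤ → ℂ,
      Summable (fun n : ℤ => Real.exp (β * |(n : ℝ)|) * ‖f n‖) →
        (∀ ℓ : ℤ, Summable fun k : ℤ => c ((N : ℤ) * ℓ - k) * f k) ∧
        Summable (fun ℓ : ℤ =>
          Real.exp (β' * |(ℓ : ℝ)|) *
            ‖((N : ℂ)⁻¹ * ∑' k : ℤ, c ((N : ℤ) * ℓ - k) * f k)‖) ∧
        (∑' ℓ : ℤ,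
            Real.exp (β' * |(ℓ : ℝ)|) *
              ‖((N : ℂ)⁻¹ * ∑' k : ℤ, c ((N : ℤ) * ℓ - k) * f k)‖) ≤
          K * ∑' n : ℤ, Real.exp (β * |(n : ℝ)|) * ‖f n‖ := by
  have hβ0 : 0 < β := lt_trans hα hβ
  set δ : ℝ := N * α - β' with hδdef
  have hδ : 0 < δ := by simp only [hδdef]; linarith
  -- summability of the weight over ℤ
  have hnat : Summable (fun n : ℕ => Real.exp (-δ * (n : ℝ))) := by
    have : Summable (fun n : ℕ => (Real.exp (-δ)) ^ n) :=
      summable_geometric_of_lt_one (Real.exp_pos _).le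
        (Real.exp_lt_one_iff.mpr (by linarith))
    simpa [← Real.exp_nat_mul, mul_comm] using this
  have hE : Summable (fun ℓ : ℤ => Real.exp (-δ * |(ℓ : ℝ)|)) := by
    apply Summable.of_nat_of_neg
    · simpa using hnat
    · simpa [abs_of_nonneg] using hnat
  set E := ∑' ℓ : ℤ, Real.exp (-δ * |(ℓ : ℝ)|) with hEdef
  refine ⟨C0 * E, fun f hf => ?_⟩
  set g : ℤ → ℝ := fun n => Real.exp (β * |(n : ℝ)|) * ‖f n‖ with hgdef
  have hg0 : ∀ n, 0 ≤ g n := fun n =>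
    mul_nonneg (Real.exp_pos _).le (norm_nonneg _)
  set G := ∑' n : ℤ, g n with hGdef
  have hG0 : 0 ≤ G := tsum_nonneg hg0
  -- crude pointwise bound
  have hbound : ∀ ℓ k : ℤ, ‖c ((N : ℤ) * ℓ - k) * f k‖ ≤ C0 * g k := by
    intro ℓ k
    rw [norm_mul]
    have h1 : ‖c ((N : ℤ) * ℓ - k)‖ ≤ C0 := by
      refine le_trans (hc _) ?_
      have : Real.exp (-α * |((((N : ℤ) * ℓ - k : ℤ)) : ℝ)|) ≤ 1 :=
        Real.exp_le_one_iff.mpr (by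
          have := abs_nonneg ((((N : ℤ) * ℓ - k : ℤ)) : ℝ)
          nlinarith)
      nlinarith [Real.exp_pos (-α * |((((N : ℤ) * ℓ - k : ℤ)) : ℝ)|)]
    have h2 : ‖f k‖ ≤ g k := by
      have h3 : (1 : ℝ) ≤ Real.exp (β * |(k : ℝ)|) := by
        rw [Real.one_le_exp_iff]
        positivity
      simpa [hgdef] using mul_le_mul_of_nonneg_right h3 (norm_nonneg (f k))
    exact mul_le_mul h1 h2 (norm_nonneg _) hC0.le
  have hsumnorm : ∀ ℓ : ℤ,
      Summable (fun k : ℤ => ‖c ((N : ℤ) * ℓ - k) * f k‖) := by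
    intro ℓ
    exact Summable.of_nonneg_of_le (fun k => norm_nonneg _)
      (fun k => hbound ℓ k) (hf.mul_left C0)
  have hsum1 : ∀ ℓ : ℤ, Summable (fun k : ℤ => c ((N : ℤ) * ℓ - k) * f k) := by
    intro ℓ
    apply Summable.of_norm
    simpa using hsumnorm ℓ
  -- key exponent bound
  have key : ∀ ℓ k : ℤ, Real.exp (β' * |(ℓ : ℝ)|) * ‖c ((N : ℤ) * ℓ - k)‖
      ≤ C0 * Real.exp (-δ * |(ℓ : ℝ)|) * Real.exp (β * |(k : ℝ)|) := by
    intro ℓ k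
    have habs : (N : ℝ) * |(ℓ : ℝ)| - |(k : ℝ)| ≤ |((((N : ℤ) * ℓ - k : ℤ)) : ℝ)| := by
      push_cast
      calc (N : ℝ) * |(ℓ : ℝ)| - |(k : ℝ)| = |(N : ℝ) * (ℓ : ℝ)| - |(k : ℝ)| := by
            rw [abs_mul, abs_of_nonneg (by positivity : (0:ℝ) ≤ (N : ℝ))]
        _ ≤ |(N : ℝ) * (ℓ : ℝ) - (k : ℝ)| := abs_sub_abs_le_abs_sub _ _
    have hexp : β' * |(ℓ : ℝ)| + (-α * |((((N : ℤ) * ℓ - k : ℤ)) : ℝ)|)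
        ≤ -δ * |(ℓ : ℝ)| + β * |(k : ℝ)| := by
      have h3 : α * ((N : ℝ) * |(ℓ : ℝ)| - |(k : ℝ)|)
          ≤ α * |((((N : ℤ) * ℓ - k : ℤ)) : ℝ)| :=
        mul_le_mul_of_nonneg_left habs hα.le
      have h4 : α * |(k : ℝ)| ≤ β * |(k : ℝ)| :=
        mul_le_mul_of_nonneg_right hβ.le (abs_nonneg _)
      simp only [hδdef]
      nlinarith
    calc Real.exp (β' * |(ℓ : ℝ)|) * ‖c ((N : ℤ) * ℓ - k)‖
        ≤ Real.exp (β' * |(ℓ : ℝ)|) * (C0 * Real.exp (-α * |((((N : ℤ) * ℓ - k : ℤ)) : ℝ)|)) := by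
          exact mul_le_mul_of_nonneg_left (hc _) (Real.exp_pos _).le
      _ = C0 * Real.exp (β' * |(ℓ : ℝ)| + (-α * |((((N : ℤ) * ℓ - k : ℤ)) : ℝ)|)) := by
          rw [Real.exp_add]; ring
      _ ≤ C0 * Real.exp (-δ * |(ℓ : ℝ)| + β * |(k : ℝ)|) := by
          exact mul_le_mul_of_nonneg_left (Real.exp_le_exp.mpr hexp) hC0.le
      _ = C0 * Real.exp (-δ * |(ℓ : ℝ)|) * Real.exp (β * |(k : ℝ)|) := by
          rw [Real.exp_add]; ring
  -- per-ℓ estimate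
  have hper : ∀ ℓ : ℤ, Real.exp (β' * |(ℓ : ℝ)|) *
      ‖(N : ℂ)⁻¹ * ∑' k : ℤ, c ((N : ℤ) * ℓ - k) * f k‖
      ≤ (C0 * G) * Real.exp (-δ * |(ℓ : ℝ)|) := by
    intro ℓ
    have hNle : ‖(N : ℂ)⁻¹‖ ≤ 1 := by
      rw [norm_inv, Complex.norm_natCast]
      have hN1 : (1 : ℝ) ≤ (N : ℝ) := by
        have : (2 : ℝ) ≤ (N : ℝ) := by exact_mod_cast hN
        linarith
      rw [inv_le_one_iff₀]
      right; exact hN1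
    have step1 : ‖(N : ℂ)⁻¹ * ∑' k : ℤ, c ((N : ℤ) * ℓ - k) * f k‖
        ≤ ∑' k : ℤ, ‖c ((N : ℤ) * ℓ - k) * f k‖ := by
      rw [norm_mul]
      calc ‖(N : ℂ)⁻¹‖ * ‖∑' k : ℤ, c ((N : ℤ) * ℓ - k) * f k‖
          ≤ 1 * ‖∑' k : ℤ, c ((N : ℤ) * ℓ - k) * f k‖ :=
            mul_le_mul_of_nonneg_right hNle (norm_nonneg _)
        _ = ‖∑' k : ℤ, c ((N : ℤ) * ℓ - k) * f k‖ := one_mul _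
        _ ≤ ∑' k : ℤ, ‖c ((N : ℤ) * ℓ - k) * f k‖ := by
            have h5 := norm_tsum_le_tsum_norm
              (hsumnorm ℓ)
            exact h5
    calc Real.exp (β' * |(ℓ : ℝ)|) *
        ‖(N : ℂ)⁻¹ * ∑' k : ℤ, c ((N : ℤ) * ℓ - k) * f k‖
        ≤ Real.exp (β' * |(ℓ : ℝ)|) * ∑' k : ℤ, ‖c ((N : ℤ) * ℓ - k) * f k‖ :=
          mul_le_mul_of_nonneg_left step1 (Real.exp_pos _).le
      _ = ∑' k : ℤ, Real.exp (β' * |(ℓ : ℝ)|) * ‖c ((N : ℤ) * ℓ - k) * f k‖ := by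
          rw [tsum_mul_left]
      _ ≤ ∑' k : ℤ, (C0 * Real.exp (-δ * |(ℓ : ℝ)|)) * g k := by
          apply Summable.tsum_le_tsum
          · intro k
            have hk := mul_le_mul_of_nonneg_right (key ℓ k) (norm_nonneg (f k))
            have heq : (C0 * Real.exp (-δ * |(ℓ : ℝ)|) * Real.exp (β * |(k : ℝ)|)) *
                ‖f k‖ = (C0 * Real.exp (-δ * |(ℓ : ℝ)|)) * g k := by
              simp only [hgdef]; ring
            rw [norm_mul, ← mul_assoc]
            exact heq ▸ hk
          · exact (hsumnorm ℓ).mul_left _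
          · exact hf.mul_left _
      _ = (C0 * Real.exp (-δ * |(ℓ : ℝ)|)) * G := by rw [tsum_mul_left]
      _ = (C0 * G) * Real.exp (-δ * |(ℓ : ℝ)|) := by ring
  have hsum2 : Summable (fun ℓ : ℤ =>
      Real.exp (β' * |(ℓ : ℝ)|) *
        ‖(N : ℂ)⁻¹ * ∑' k : ℤ, c ((N : ℤ) * ℓ - k) * f k‖) := by
    exact Summable.of_nonneg_of_le
      (fun ℓ => mul_nonneg (Real.exp_pos _).le (norm_nonneg _))
      hper (hE.mul_left _)
  refine ⟨hsum1, hsum2, ?_⟩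
  calc (∑' ℓ : ℤ, Real.exp (β' * |(ℓ : ℝ)|) *
      ‖(N : ℂ)⁻¹ * ∑' k : ℤ, c ((N : ℤ) * ℓ - k) * f k‖)
      ≤ ∑' ℓ : ℤ, (C0 * G) * Real.exp (-δ * |(ℓ : ℝ)|) :=
        Summable.tsum_le_tsum hper hsum2 (hE.mul_left _)
    _ = (C0 * G) * E := by rw [tsum_mul_left]
    _ = (C0 * E) * G := by ring
end

section
/- Let m(z) = ∑_{j=1}^N z^{1-j} [W(z^N)]_{1j}, where W is an N×N matrix-valued function taking unitary values on the unit circle 𝕋. Then for every z ∈ 𝕋, (1/N) ∑_{ω∈𝕋, ω^N = z} |m(ω)|² = 1. -/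
open Polynomial Matrix

lemma aux_sum_zpow_nthRoots {N : ℕ} (hN : 0 < N) {z : ℂ} (hz : z ≠ 0) (d : ℤ)
    (hd : -(N : ℤ) < d) (hd' : d < N) :
    ∑ ω ∈ (nthRoots N z).toFinset, ω ^ d = if d = 0 then (N : ℂ) else 0 := by
  have hζ := Complex.isPrimitiveRoot_exp N hN.ne'
  obtain ⟨α, hα⟩ := IsAlgClosed.exists_pow_nat_eq z hN
  have hα0 : α ≠ 0 := by rintro rfl; exact hz (by simpa [zero_pow hN.ne'] using hα.symm)
  set ζ : ℂ := Complex.exp (2 * Real.pi * Complex.I / N) with hζdef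
  have hroots := hζ.nthRoots_eq hα
  have himg : (nthRoots N z).toFinset = (Finset.range N).image (fun i => ζ ^ i * α) := by
    rw [hroots, Multiset.toFinset_map]
    congr 1
    ext x; simp
  rw [himg, Finset.sum_image (fun x hx y hy h => hζ.injOn_pow_mul hα0 (by simpa using hx) (by simpa using hy) h)]
  have key : ∀ i : ℕ, (ζ ^ i * α) ^ d = (ζ ^ d) ^ i * α ^ d := by
    intro i
    rw [mul_zpow, ← zpow_natCast ζ i, ← _root_.zpow_mul, mul_comm (i:ℤ) d, _root_.zpow_mul, zpow_natCast]
  simp_rw [key, ← Finset.sum_mul]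
  by_cases hd0 : d = 0
  · subst hd0; simp
  · rw [if_neg hd0]
    have hx1 : ζ ^ d ≠ 1 := by
      intro h
      have hdvd : (N : ℤ) ∣ d := (hζ.zpow_eq_one_iff_dvd d).mp h
      have h2 : (N : ℤ) ∣ |d| := (dvd_abs _ _).mpr hdvd
      have h3 := Int.le_of_dvd (by rw [abs_pos]; exact hd0) h2
      rcases abs_cases d with ⟨he, _⟩ | ⟨he, _⟩ <;> omega
    have hxN : (ζ ^ d) ^ N = 1 := by
      rw [← zpow_natCast, ← _root_.zpow_mul, mul_comm, _root_.zpow_mul, zpow_natCast, hζ.pow_eq_one, _root_.one_zpow]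
    rw [geom_sum_eq hx1, hxN]
    simp

/-- Let `m(z) = ∑_{j=1}^N z^{1-j} [W(z^N)]_{1j}` where `W` is an `N×N` matrix function
taking unitary values on the unit circle. Then for every `z` on the unit circle,
`(1/N) ∑_{ω^N = z} |m(ω)|² = 1`. -/
theorem ruelle_fixed_point_one
    (N : ℕ) (hN : 2 ≤ N)
    (W : ℂ → Matrix (Fin N) (Fin N) ℂ)
    (hW : ∀ z : ℂ, ‖z‖ = 1 → (W z)ᴴ * W z = 1)
    (m : ℂ → ℂ)
    (hm : ∀ ω : ℂ, m ω = ∑ j : Fin N, ω ^ (-(j : ℤ)) * W (ω ^ N) ⟨0, by omega⟩ j) :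
    ∀ z : ℂ, ‖z‖ = 1 →
      (1 / (N : ℝ)) * ∑ ω ∈ (nthRoots N z).toFinset, ‖m ω‖ ^ 2 = 1 := by
  intro z hz
  have hN0 : 0 < N := by omega
  have hz0 : z ≠ 0 := by intro h; rw [h] at hz; simp at hz
  set i0 : Fin N := ⟨0, by omega⟩
  set F := (nthRoots N z).toFinset with hF
  have hmem : ∀ ω ∈ F, ω ^ N = z := fun ω h => (mem_nthRoots hN0).mp (Multiset.mem_toFinset.mp h)
  have habs : ∀ ω ∈ F, ‖ω‖ = 1 := by
    intro ω h
    have h1 : ‖ω‖ ^ N = 1 := by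
      rw [← norm_pow, hmem ω h]; exact hz
    have h2 := norm_nonneg ω
    by_contra hne
    rcases lt_or_gt_of_ne hne with hlt | hgt
    · exact absurd h1 (by nlinarith [pow_lt_one₀ h2 hlt hN0.ne'])
    · exact absurd h1 (by nlinarith [one_lt_pow₀ hgt hN0.ne'])
  have hω0 : ∀ ω ∈ F, ω ≠ 0 := by
    intro ω h h0
    have := habs ω h
    rw [h0] at this
    simp at this
  have hconj : ∀ ω ∈ F, (starRingEnd ℂ) ω = ω⁻¹ := by
    intro ω h
    rw [Complex.inv_def, Complex.normSq_eq_norm_sq, habs ω h]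
    simp
  -- row orthonormality
  have hWW : W z * (W z)ᴴ = 1 := mul_eq_one_comm.mp (hW z hz)
  have hrow : ∑ j : Fin N, W z i0 j * (starRingEnd ℂ) (W z i0 j) = 1 := by
    have := congrFun (congrFun hWW i0) i0
    rw [Matrix.mul_apply] at this
    simpa [Matrix.conjTranspose_apply] using this
  -- per-root expansion
  have key : ∀ ω ∈ F, (Complex.normSq (m ω) : ℂ)
      = ∑ j : Fin N, ∑ k : Fin N,
          ω ^ ((k : ℤ) - (j : ℤ)) * (W z i0 j * (starRingEnd ℂ) (W z i0 k)) := by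
    intro ω h
    have hω : ω ≠ 0 := hω0 ω h
    rw [← Complex.mul_conj, hm ω, hmem ω h, map_sum, Finset.sum_mul_sum]
    refine Finset.sum_congr rfl fun j _ => Finset.sum_congr rfl fun k _ => ?_
    rw [map_mul (starRingEnd ℂ), map_zpow₀, hconj ω h, _root_.inv_zpow, ← _root_.zpow_neg, neg_neg, sub_eq_add_neg,
      zpow_add₀ hω]
    ring
  calc (1 / (N : ℝ)) * ∑ ω ∈ F, ‖m ω‖ ^ 2
      = (1 / (N : ℝ)) * ∑ ω ∈ F, Complex.normSq (m ω) := by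
        simp_rw [Complex.sq_norm]
    _ = 1 := by
        have hC : ∑ ω ∈ F, (Complex.normSq (m ω) : ℂ) = (N : ℂ) := by
          rw [Finset.sum_congr rfl key, Finset.sum_comm]
          have : ∀ j : Fin N, ∑ ω ∈ F, ∑ k : Fin N,
              ω ^ ((k : ℤ) - (j : ℤ)) * (W z i0 j * (starRingEnd ℂ) (W z i0 k))
              = (N : ℂ) * (W z i0 j * (starRingEnd ℂ) (W z i0 j)) := by
            intro j
            rw [Finset.sum_comm]
            have hterm : ∀ k : Fin N,
                ∑ ω ∈ F, ω ^ ((k : ℤ) - (j : ℤ)) * (W z i0 j * (starRingEnd ℂ) (W z i0 k))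
                = (if (k : ℤ) - (j : ℤ) = 0 then (N : ℂ) else 0) * (W z i0 j * (starRingEnd ℂ) (W z i0 k)) := by
              intro k
              rw [← Finset.sum_mul, aux_sum_zpow_nthRoots hN0 hz0 _ (by omega) (by omega)]
            rw [Finset.sum_congr rfl fun k _ => hterm k]
            rw [Finset.sum_eq_single j]
            · simp
            · intro k _ hkj
              have hne : ¬((k : ℤ) - (j : ℤ) = 0) := by
                intro hc; exact hkj (Fin.ext (by omega))
              rw [if_neg hne, zero_mul]
            · simp
          rw [Finset.sum_congr rfl fun j _ => this j, ← Finset.mul_sum, hrow, mul_one]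
        have hR : ∑ ω ∈ F, Complex.normSq (m ω) = (N : ℝ) := by
          have := hC
          push_cast at this ⊢
          exact_mod_cast this
        rw [hR]
        field_simp
end
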